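/- Let D, E, F(Φⁿ) be symmetric positive semidefinite matrices with D + E positive definite, β > 0, and ‖Φⁿ‖ = 1. Let Φ̃^{n+1} = (I + k(D + E + βF(Φⁿ)))^{-1}Φⁿ. Then the frozen-coefficient energy Ẽ_{Φⁿ}(Φ) = Φᵀ(D+E)Φ + β Σ_j φ_j²(φⁿ_j)² satisfies Ẽ_{Φⁿ}(Φ̃^{n+1}/‖Φ̃^{n+1}‖) ≤ Ẽ_{Φⁿ}(Φⁿ). -/

import Mathlib

open Matrix

noncomputable section

lemma smul_posSemidef {n : ℕ} {M : Matrix (Fin n) (Fin n) ℝ} (hM : M.PosSemidef)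
    {c : ℝ} (hc : 0 ≤ c) : (c • M).PosSemidef := by
  constructor
  · show (c • M)ᴴ = c • M
    rw [Matrix.conjTranspose_smul, hM.1.eq, star_trivial]
  · exact (hM.smul hc).2

theorem stmt17 {n : ℕ} (D E : Matrix (Fin n) (Fin n) ℝ)
    (hD : D.PosSemidef) (hE : E.PosSemidef) (hDE : (D + E).PosDef)
    (β k : ℝ) (hβ : 0 < β) (hk : 0 < k)
    (Φn : Fin n → ℝ) (hΦn : Φn ⬝ᵥ Φn = 1)
    (Φt : Fin n → ℝ)
    (hΦt : Φt =
      ((1 : Matrix (Fin n) (Fin n) ℝ) +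
        k • (D + E + β • Matrix.diagonal fun j => (Φn j) ^ 2))⁻¹ *ᵥ Φn) :
    ((Real.sqrt (Φt ⬝ᵥ Φt))⁻¹ • Φt) ⬝ᵥ ((D + E) *ᵥ ((Real.sqrt (Φt ⬝ᵥ Φt))⁻¹ • Φt)) +
        β * ∑ j, ((Real.sqrt (Φt ⬝ᵥ Φt))⁻¹ * Φt j) ^ 2 * (Φn j) ^ 2 ≤
      Φn ⬝ᵥ ((D + E) *ᵥ Φn) + β * ∑ j, (Φn j) ^ 2 * (Φn j) ^ 2 := by
  set F : Matrix (Fin n) (Fin n) ℝ := Matrix.diagonal fun j => (Φn j) ^ 2 with hF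
  set A : Matrix (Fin n) (Fin n) ℝ := D + E + β • F with hAdef
  have hFpsd : F.PosSemidef := Matrix.PosSemidef.diagonal (fun j => sq_nonneg _)
  have hβF : (β • F).PosSemidef := smul_posSemidef hFpsd hβ.le
  have hApd : A.PosDef := hDE.add_posSemidef hβF
  have hkA : (k • A).PosSemidef := smul_posSemidef hApd.posSemidef hk.le
  have hMpd : ((1 : Matrix (Fin n) (Fin n) ℝ) + k • A).PosDef :=
    Matrix.PosDef.one.add_posSemidef hkA
  -- x = (1 + kA) y
  have hinv : ((1 : Matrix (Fin n) (Fin n) ℝ) + k • A) *ᵥ Φt = Φn := by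
    rw [hΦt, Matrix.mulVec_mulVec, Matrix.mul_nonsing_inv _
      ((Matrix.isUnit_iff_isUnit_det _).mp hMpd.isUnit), Matrix.one_mulVec]
  have hx : Φn = Φt + k • (A *ᵥ Φt) := by
    rw [← hinv, Matrix.add_mulVec, Matrix.one_mulVec, Matrix.smul_mulVec]
  -- symmetry helper
  have hsym : ∀ u v : Fin n → ℝ, u ⬝ᵥ (A *ᵥ v) = (A *ᵥ u) ⬝ᵥ v := by
    intro u v
    have hAt : Aᵀ = A := by
      have h := hApd.isHermitian.eq
      simpa using h
    rw [Matrix.dotProduct_mulVec, ← Matrix.mulVec_transpose, hAt]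
  set z : Fin n → ℝ := A *ᵥ Φt with hz
  set a0 : ℝ := Φt ⬝ᵥ Φt with ha0
  set a1 : ℝ := Φt ⬝ᵥ z with ha1
  set a2 : ℝ := z ⬝ᵥ z with ha2
  set a3 : ℝ := z ⬝ᵥ (A *ᵥ z) with ha3
  -- Cauchy-Schwarz 1 : a1^2 ≤ a0 * a2
  have cs1 : a1 ^ 2 ≤ a0 * a2 := by
    have := Finset.sum_mul_sq_le_sq_mul_sq Finset.univ Φt z
    simpa [ha0, ha1, ha2, dotProduct, pow_two] using this
  -- Cauchy-Schwarz 2 via sqrt of A : a2^2 ≤ a1 * a3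
  have hS := hApd.posSemidef
  set S : Matrix (Fin n) (Fin n) ℝ := (open scoped MatrixOrder in CFC.sqrt A) with hSdef
  have hSS : S * S = A := open scoped MatrixOrder in CFC.sqrt_mul_sqrt_self A hS.nonneg
  have hSsym : Sᵀ = S := (open scoped MatrixOrder in (CFC.sqrt_nonneg A).posSemidef).1.eq
  have hform : ∀ u v : Fin n → ℝ, u ⬝ᵥ (A *ᵥ v) = (S *ᵥ u) ⬝ᵥ (S *ᵥ v) := by
    intro u v
    rw [← hSS, ← Matrix.mulVec_mulVec, Matrix.dotProduct_mulVec, ← Matrix.mulVec_transpose,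
      hSsym]
  have cs2 : a2 ^ 2 ≤ a1 * a3 := by
    have h2 : a2 = (S *ᵥ Φt) ⬝ᵥ (S *ᵥ z) := by
      rw [ha2, ← hform, hz, hsym, dotProduct_comm]
    have h1 : a1 = (S *ᵥ Φt) ⬝ᵥ (S *ᵥ Φt) := by rw [ha1, hz, hform]
    have h3 : a3 = (S *ᵥ z) ⬝ᵥ (S *ᵥ z) := by rw [ha3, hform]
    rw [h1, h2, h3]
    have := Finset.sum_mul_sq_le_sq_mul_sq Finset.univ (S *ᵥ Φt) (S *ᵥ z)
    simpa [dotProduct, pow_two] using this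
  -- positivity facts
  have hΦtne : Φt ≠ 0 := by
    intro h
    rw [h] at hinv
    rw [Matrix.mulVec_zero] at hinv
    rw [← hinv] at hΦn
    simp at hΦn
  have ha0pos : 0 < a0 := by
    rw [ha0, dotProduct]
    obtain ⟨i, hi⟩ := Function.ne_iff.mp hΦtne
    exact Finset.sum_pos' (fun j _ => mul_self_nonneg (Φt j))
      ⟨i, Finset.mem_univ i, mul_self_pos.mpr (by simpa using hi)⟩
  have ha1pos : 0 < a1 := by
    have := hApd.dotProduct_mulVec_pos hΦtne
    simpa [ha1, hz] using this
  have ha2nonneg : 0 ≤ a2 := by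
    rw [ha2, dotProduct]
    exact Finset.sum_nonneg fun i _ => mul_self_nonneg _
  have ha3nonneg : 0 ≤ a3 := by
    have := hApd.posSemidef.dotProduct_mulVec_nonneg z
    simpa [ha3] using this
  have ha2pos : 0 < a2 := by
    rcases ha2nonneg.lt_or_eq with h | h
    · exact h
    · exfalso; nlinarith
  have key3 : a1 * a2 ≤ a0 * a3 := by nlinarith
  -- quadratic form identities
  have hxx : a0 + 2 * k * a1 + k ^ 2 * a2 = 1 := by
    have : Φn ⬝ᵥ Φn = a0 + 2 * k * a1 + k ^ 2 * a2 := by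
      rw [hx]
      simp only [add_dotProduct, dotProduct_add, smul_dotProduct,
        dotProduct_smul, smul_eq_mul]
      rw [dotProduct_comm z Φt, ← ha0, ← ha1, ← ha2]
      ring
    linarith [hΦn, this.symm.le, this.le]
  have hxAx : Φn ⬝ᵥ (A *ᵥ Φn) = a1 + 2 * k * a2 + k ^ 2 * a3 := by
    rw [hx]
    rw [Matrix.mulVec_add, Matrix.mulVec_smul]
    simp only [add_dotProduct, dotProduct_add, smul_dotProduct,
      dotProduct_smul, smul_eq_mul, ← hz]
    have h1 : Φt ⬝ᵥ (A *ᵥ z) = a2 := by rw [hsym, ← hz, ← ha2]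
    have h2 : z ⬝ᵥ z = a2 := ha2.symm
    rw [h1, ← ha1, ← ha3, h2]
    ring
  -- main inequality : a1 ≤ a0 * (Φn ⬝ᵥ A Φn)
  have main : a1 ≤ a0 * (Φn ⬝ᵥ (A *ᵥ Φn)) := by
    rw [hxAx]
    nlinarith
  -- energy identity
  have energy : ∀ u : Fin n → ℝ,
      u ⬝ᵥ (A *ᵥ u) = u ⬝ᵥ ((D + E) *ᵥ u) + β * ∑ j, (u j) ^ 2 * (Φn j) ^ 2 := by
    intro u
    have hdiag : u ⬝ᵥ (F *ᵥ u) = ∑ j, (u j) ^ 2 * (Φn j) ^ 2 := by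
      rw [hF, dotProduct]
      refine Finset.sum_congr rfl fun j _ => ?_
      rw [Matrix.mulVec_diagonal]
      ring
    rw [hAdef, Matrix.add_mulVec, dotProduct_add, Matrix.smul_mulVec,
      dotProduct_smul, smul_eq_mul, hdiag]
  -- now rewrite the goal
  set c : ℝ := (Real.sqrt a0)⁻¹ with hc
  have hcsq : c * c = a0⁻¹ := by
    rw [hc, ← mul_inv]
    rw [Real.mul_self_sqrt ha0pos.le]
  have LHSeq : ((c • Φt) ⬝ᵥ ((D + E) *ᵥ (c • Φt)) + β * ∑ j, (c * Φt j) ^ 2 * (Φn j) ^ 2)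
      = a0⁻¹ * a1 := by
    have := energy (c • Φt)
    have hcu : ∀ j, (c • Φt) j = c * Φt j := fun j => rfl
    have e2 : (c • Φt) ⬝ᵥ (A *ᵥ (c • Φt)) = c * c * a1 := by
      rw [smul_dotProduct, Matrix.mulVec_smul, dotProduct_smul]
      simp only [smul_eq_mul, ← hz, ← ha1]
      ring
    calc (c • Φt) ⬝ᵥ ((D + E) *ᵥ (c • Φt)) + β * ∑ j, (c * Φt j) ^ 2 * (Φn j) ^ 2
        = (c • Φt) ⬝ᵥ (A *ᵥ (c • Φt)) := by
          rw [energy (c • Φt)]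
          simp only [Pi.smul_apply, smul_eq_mul]
      _ = a0⁻¹ * a1 := by rw [e2, hcsq]
  calc ((Real.sqrt (Φt ⬝ᵥ Φt))⁻¹ • Φt) ⬝ᵥ ((D + E) *ᵥ ((Real.sqrt (Φt ⬝ᵥ Φt))⁻¹ • Φt)) +
        β * ∑ j, ((Real.sqrt (Φt ⬝ᵥ Φt))⁻¹ * Φt j) ^ 2 * (Φn j) ^ 2
      = a0⁻¹ * a1 := LHSeq
    _ ≤ Φn ⬝ᵥ (A *ᵥ Φn) := by
        have h := mul_le_mul_of_nonneg_left main (inv_nonneg.mpr ha0pos.le)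
        rw [← mul_assoc, inv_mul_cancel₀ ha0pos.ne', one_mul] at h
        exact h
    _ = Φn ⬝ᵥ ((D + E) *ᵥ Φn) + β * ∑ j, (Φn j) ^ 2 * (Φn j) ^ 2 := energy Φn
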